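/- Let A ∈ ℝ^{m×n}, b ∈ ℝ^m, and suppose the sequences (s_k), (w_k) and positive scalars α_k, β_k satisfy the Golub-Kahan recurrences: β₁ s₁ = b, α_k w_k = Aᵀ s_k − β_k w_{k-1}, β_{k+1} s_{k+1} = A w_k − α_k s_k (with w₀ = 0). Then for every k ≥ 0 there exist polynomials φ_k of degree k with s_{k+1} = φ_k(AAᵀ) b, and the constant term of φ_k satisfies φ_k(0) = (-1)^k (1/β_{k+1}) ∏_{j=1}^k (α_j/β_j). -/
import Mathlib


open Finset Matrix Polynomial

section aux

variable {m n : ℕ} (M : Matrix (Fin m) (Fin m) ℝ) (b : Fin m → ℝ)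

lemma aux_aeval_C_mul (c : ℝ) (p : Polynomial ℝ) :
    (Polynomial.aeval M (Polynomial.C c * p)).mulVec b
      = c • (Polynomial.aeval M p).mulVec b := by
  rw [_root_.map_mul, aeval_C, Algebra.algebraMap_eq_smul_one, smul_mul_assoc, one_mul,
    Matrix.smul_mulVec]

lemma aux_aeval_sub (p q : Polynomial ℝ) :
    (Polynomial.aeval M (p - q)).mulVec b
      = (Polynomial.aeval M p).mulVec b - (Polynomial.aeval M q).mulVec b := by
  rw [map_sub, Matrix.sub_mulVec]

lemma aux_aeval_X_mul (p : Polynomial ℝ) :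
    (Polynomial.aeval M (Polynomial.X * p)).mulVec b
      = M.mulVec ((Polynomial.aeval M p).mulVec b) := by
  rw [_root_.map_mul, aeval_X, ← Matrix.mulVec_mulVec]

end aux

/-- Golub-Kahan bidiagonalization vectors as Lanczos polynomials.
Under the recurrences, `s_{k+1} = φ_k(AAᵀ)b` for a polynomial `φ_k` of degree `k`
with constant term `φ_k(0) = (-1)^k (1/β_{k+1}) ∏_{j=1}^k (α_j/β_j)`. -/
theorem golub_kahan_left_lanczos_polynomials
    (m n : ℕ) (A : Matrix (Fin m) (Fin n) ℝ) (b : Fin m → ℝ) (hb : b ≠ 0)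
    (α β : ℕ → ℝ) (hα : ∀ j, 0 < α j) (hβ : ∀ j, 0 < β j)
    (s : ℕ → (Fin m → ℝ)) (w : ℕ → (Fin n → ℝ))
    (hw0 : w 0 = 0)
    (hβ1 : β 1 = Real.sqrt (∑ i, b i ^ 2))
    (hs1 : β 1 • s 1 = b)
    (hwrec : ∀ j, 1 ≤ j → α j • w j = Aᵀ.mulVec (s j) - β j • w (j - 1))
    (hsrec : ∀ j, 1 ≤ j → β (j + 1) • s (j + 1) = A.mulVec (w j) - α j • s j) :
    ∀ k : ℕ, ∃ φ : Polynomial ℝ,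
      φ.natDegree = k ∧
      s (k + 1) = (Polynomial.aeval (A * Aᵀ) φ).mulVec b ∧
      φ.coeff 0 = (-1 : ℝ) ^ k * (1 / β (k + 1)) * ∏ j ∈ Finset.Icc 1 k, α j / β j := by
  intro k
  suffices h : ∃ φ χ : Polynomial ℝ,
      (∀ i, k < i → φ.coeff i = 0) ∧ 0 < φ.coeff k ∧
      (∀ i, k ≤ i → χ.coeff i = 0) ∧
      s (k + 1) = (Polynomial.aeval (A * Aᵀ) φ).mulVec b ∧
      w k = Aᵀ.mulVec ((Polynomial.aeval (A * Aᵀ) χ).mulVec b) ∧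
      φ.coeff 0 = (-1 : ℝ) ^ k * (1 / β (k + 1)) * ∏ j ∈ Finset.Icc 1 k, α j / β j by
    obtain ⟨φ, χ, hφ, hφk, _, hs, _, hc0⟩ := h
    exact ⟨φ, le_antisymm (natDegree_le_iff_coeff_eq_zero.mpr hφ)
      (le_natDegree_of_ne_zero hφk.ne'), hs, hc0⟩
  induction k with
  | zero =>
    refine ⟨Polynomial.C (β 1)⁻¹, 0, ?_, ?_, ?_, ?_, ?_, ?_⟩
    · intro i hi
      rw [coeff_C, if_neg (by omega)]
    · simpa using inv_pos.mpr (hβ 1)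
    · intro i _; simp
    · have : s 1 = (β 1)⁻¹ • b := by
        rw [← hs1, smul_smul, inv_mul_cancel₀ (hβ 1).ne', one_smul]
      rw [this]
      rw [aeval_C, Algebra.algebraMap_eq_smul_one, Matrix.smul_mulVec,
        Matrix.one_mulVec]
    · simp [hw0]
    · simp
  | succ k ih =>
    obtain ⟨φ, χ, hφ, hφk, hχ, hs, hw, hc0⟩ := ih
    set M := A * Aᵀ with hM
    set χ' : Polynomial ℝ :=
      Polynomial.C (α (k + 1))⁻¹ * (φ - Polynomial.C (β (k + 1)) * χ) with hχ'def
    set φ' : Polynomial ℝ :=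
      Polynomial.C (β (k + 2))⁻¹ * (Polynomial.X * χ' - Polynomial.C (α (k + 1)) * φ)
      with hφ'def
    have hχ'coeff : ∀ i, χ'.coeff i = (α (k + 1))⁻¹ * (φ.coeff i - β (k + 1) * χ.coeff i) := by
      intro i; simp [hχ'def, coeff_C_mul, coeff_sub]
    have hχ'high : ∀ i, k + 1 ≤ i → χ'.coeff i = 0 := by
      intro i hi
      rw [hχ'coeff, hφ i (by omega), hχ i (by omega)]
      ring
    have hχ'k : 0 < χ'.coeff k := by
      rw [hχ'coeff, hχ k le_rfl]
      have := inv_pos.mpr (hα (k + 1))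
      nlinarith
    have hφ'coeff : ∀ i, φ'.coeff i
        = (β (k + 2))⁻¹ * ((Polynomial.X * χ').coeff i - α (k + 1) * φ.coeff i) := by
      intro i; simp [hφ'def, coeff_C_mul, coeff_sub]
    have hχ'aeval : (Polynomial.aeval M χ').mulVec b
        = (α (k + 1))⁻¹ • ((Polynomial.aeval M φ).mulVec b
            - β (k + 1) • (Polynomial.aeval M χ).mulVec b) := by
      rw [hχ'def, aux_aeval_C_mul, aux_aeval_sub, aux_aeval_C_mul]
    have hφ'aeval : (Polynomial.aeval M φ').mulVec b
        = (β (k + 2))⁻¹ • (M.mulVec ((Polynomial.aeval M χ').mulVec b)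
            - α (k + 1) • (Polynomial.aeval M φ).mulVec b) := by
      rw [hφ'def, aux_aeval_C_mul, aux_aeval_sub, aux_aeval_C_mul, aux_aeval_X_mul]
    -- new w
    have hwnew : w (k + 1) = Aᵀ.mulVec ((Polynomial.aeval M χ').mulVec b) := by
      have hrec := hwrec (k + 1) (by omega)
      simp only [Nat.add_sub_cancel] at hrec
      have h1 : w (k + 1) = (α (k + 1))⁻¹ • (Aᵀ.mulVec (s (k + 1)) - β (k + 1) • w k) := by
        rw [← hrec, smul_smul, inv_mul_cancel₀ (hα (k + 1)).ne', one_smul]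
      rw [h1, hs, hw, hχ'aeval, Matrix.mulVec_smul, Matrix.mulVec_sub, Matrix.mulVec_smul]
    -- new s
    have hsnew : s (k + 2) = (Polynomial.aeval M φ').mulVec b := by
      have hrec := hsrec (k + 1) (by omega)
      have h1 : s (k + 2) = (β (k + 2))⁻¹ • (A.mulVec (w (k + 1)) - α (k + 1) • s (k + 1)) := by
        rw [← hrec, smul_smul, inv_mul_cancel₀ (hβ (k + 2)).ne', one_smul]
      rw [h1, hwnew, hs, hφ'aeval, Matrix.mulVec_mulVec, hM]
    refine ⟨φ', χ', ?_, ?_, hχ'high, hsnew, hwnew, ?_⟩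
    · intro i hi
      obtain ⟨j, rfl⟩ : ∃ j, i = j + 1 := ⟨i - 1, by omega⟩
      rw [hφ'coeff, coeff_X_mul, hχ'high j (by omega), hφ _ (by omega)]
      ring
    · rw [hφ'coeff, coeff_X_mul, hφ (k + 1) (by omega)]
      have := inv_pos.mpr (hβ (k + 2))
      nlinarith
    · rw [hφ'coeff]
      have h0 : (Polynomial.X * χ').coeff 0 = 0 := by
        simp [Polynomial.mul_coeff_zero]
      rw [h0, hc0, Finset.prod_Icc_succ_top (by omega)]
      field_simp
      ring
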